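/- For every links system L with links indexed as described: let L' be a set of exactly k/2 links with ℓ_k ∉ L' that is contained in some nested cut, let h be the smallest index with L' ⊆ δ_L(N_h), and suppose h ≥ 2. Let L̄ = δ_L(N_h) ∖ L' and let g be the smallest index with L̄ ⊆ δ_L(N_g). Then g < h, and the set L'' = δ_L(N_g) ∖ L̄ consists of exactly k/2 links, does not contain ℓ_k, satisfies the vector identity χ^{L''} = χ^{L'} − χ^{δ_L(N_h)} + χ^{δ_L(N_g)} in ℝ^L, and satisfies φ(L'') = φ(L'). -/
import Mathlib


open Finset

namespace CoverSmallCuts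

/-- `nn k` is the number `n = 2 + k(k-1)/2` of nodes. -/
def nn (k : ℕ) : ℕ := 2 + k * (k - 1) / 2

/-- `mm k` is the number `m = k(k-1)/2 + k` of links. -/
def mm (k : ℕ) : ℕ := k * (k - 1) / 2 + k

/-- The nested set `N_i = {1, …, i}`. -/
def Nset (i : ℕ) : Finset ℕ := Finset.Icc 1 i

/-- The Q-set `Q_j = {2+(j-1)k/2, …, 1+j·k/2}`. -/
def Qset (k j : ℕ) : Finset ℕ := Finset.Icc (2 + (j - 1) * (k / 2)) (1 + j * (k / 2))

/-- Capacity of the path edge `{i, i+1}` of the capacitated graph `G`. -/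
def pathCap (k i : ℕ) : ℕ :=
  if i = 1 ∨ i = nn k - 1 then 2
  else if ∃ j ∈ Finset.Icc 1 (k - 1), i ∈ Qset k j ∧ i + 1 ∈ Qset k j then 3
  else 1

/-- Capacity of the cut `δ(S)` in the capacitated graph `G`: the sum of the capacities
of the edges of `G` with exactly one endpoint in `S`. -/
def cutCap (k : ℕ) (S : Finset ℕ) : ℕ :=
  (∑ i ∈ Finset.Icc 1 (nn k - 1),
      if (i ∈ S) ↔ ((i + 1) ∈ S) then 0 else pathCap k i)
  + (∑ j ∈ Finset.Icc 1 (k - 1),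
      if ((1 + (j - 1) * (k / 2)) ∈ S) ↔ ((2 + j * (k / 2)) ∈ S) then 0 else 1)

/-- A links system: the `s,t`-paths `P_1, …, P_{k-1}` are recorded by the function
`node`, where `node i t` is the `t`-th node of the path `P_i` (for `1 ≤ i ≤ k-1` and
`0 ≤ t ≤ k/2 + 1`); the class `P_k` consists of the single link `{1, n}`. -/
structure LinksSystem (k : ℕ) where
  node : ℕ → ℕ → ℕ
  /-- each path `P_i` starts at `s = 1` -/
  node_first : ∀ i ∈ Finset.Icc 1 (k - 1), node i 0 = 1
  /-- each path `P_i` ends at `t = n` -/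
  node_last : ∀ i ∈ Finset.Icc 1 (k - 1), node i (k / 2 + 1) = nn k
  /-- node indices strictly increase along each path -/
  node_mono : ∀ i ∈ Finset.Icc 1 (k - 1), ∀ t ≤ k / 2, node i t < node i (t + 1)
  /-- every node in `{2, …, n-1}` is an internal node of exactly one of `P_1, …, P_{k-1}` -/
  cover : ∀ v ∈ Finset.Icc 2 (nn k - 1),
      ∃! i, i ∈ Finset.Icc 1 (k - 1) ∧ ∃ t ∈ Finset.Icc 1 (k / 2), node i t = v
  /-- `P_i` has an internal node in `Q_j` iff
  `(i ≤ j ≤ min(i+k/2-1, k-1))` or `(j < i and j ≤ i-k/2)` -/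
  meetsQ : ∀ i ∈ Finset.Icc 1 (k - 1), ∀ j ∈ Finset.Icc 1 (k - 1),
      ((∃ t ∈ Finset.Icc 1 (k / 2), node i t ∈ Qset k j) ↔
        ((i ≤ j ∧ j ≤ min (i + k / 2 - 1) (k - 1)) ∨ (j < i ∧ j ≤ i - k / 2)))

/-- The class `P_i` of links: the edge set of the path `P_i` for `i < k`,
and `{{1, n}}` for `i = k`. -/
def LinksSystem.P {k : ℕ} (LS : LinksSystem k) (i : ℕ) : Finset (Sym2 ℕ) :=
  if i = k then {s(1, nn k)}
  else (Finset.Icc 0 (k / 2)).image fun t => s(LS.node i t, LS.node i (t + 1))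

/-- The set `L` of all links. -/
def LinksSystem.links {k : ℕ} (LS : LinksSystem k) : Finset (Sym2 ℕ) :=
  (Finset.Icc 1 k).biUnion LS.P

open scoped Classical in
/-- `deltaL F S` is `δ_F(S)`: the set of links of `F` with exactly one endpoint in `S`. -/
noncomputable def deltaL (F : Finset (Sym2 ℕ)) (S : Finset ℕ) : Finset (Sym2 ℕ) :=
  F.filter fun e => ∃ a b, e = s(a, b) ∧ a ∈ S ∧ b ∉ S

/-- The 0-1 indicator vector `χ^F` of a set `F` of links. -/
noncomputable def chi (F : Finset (Sym2 ℕ)) : Sym2 ℕ → ℝ :=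
  fun e => if e ∈ F then 1 else 0


/-! ### Auxiliary lemmas -/

lemma exists_cross_aux (f : ℕ → ℕ) (i : ℕ) :
    ∀ m, f 0 ≤ i → i < f (m + 1) → ∃ t ≤ m, f t ≤ i ∧ i < f (t + 1) := by
  intro m
  induction m with
  | zero => intro h1 h2; exact ⟨0, le_refl 0, h1, h2⟩
  | succ m ih =>
    intro h1 h2
    by_cases hc : i < f (m + 1)
    · obtain ⟨t, ht, ha, hb⟩ := ih h1 hc
      exact ⟨t, ht.trans (Nat.le_succ m), ha, hb⟩
    · exact ⟨m + 1, le_refl _, Nat.le_of_not_lt hc, h2⟩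

lemma mono_of_step (f : ℕ → ℕ) (m : ℕ) (hf : ∀ t ≤ m, f t < f (t + 1)) :
    ∀ a b, a < b → b ≤ m + 1 → f a < f b := by
  intro a b hab hbm
  induction b with
  | zero => omega
  | succ b ih =>
    rcases Nat.lt_or_ge a b with hc | hc
    · exact (ih hc (by omega)).trans (hf b (by omega))
    · have : a = b := by omega
      subst this; exact hf a (by omega)

lemma image_sdiff_injOn {α β : Type*} [DecidableEq α] [DecidableEq β]
    (S T : Finset α) (f : α → β) (hT : T ⊆ S)
    (hinj : ∀ e1 ∈ S, ∀ e2 ∈ S, f e1 = f e2 → e1 = e2) :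
    (S \ T).image f = S.image f \ T.image f := by
  ext u
  simp only [Finset.mem_image, Finset.mem_sdiff]
  constructor
  · rintro ⟨e, ⟨heS, heT⟩, rfl⟩
    refine ⟨⟨e, heS, rfl⟩, ?_⟩
    rintro ⟨e', he'T, he'⟩
    exact heT (hinj e' (hT he'T) e heS he' ▸ he'T)
  · rintro ⟨⟨e, heS, rfl⟩, hu⟩
    exact ⟨e, ⟨heS, fun heT => hu ⟨e, heT, rfl⟩⟩, rfl⟩

section LSLemmas

variable {k : ℕ} (LS : LinksSystem k)

lemma node_lt {j : ℕ} (hj : j ∈ Finset.Icc 1 (k - 1)) {a b : ℕ}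
    (hab : a < b) (hb : b ≤ k / 2 + 1) : LS.node j a < LS.node j b :=
  mono_of_step (LS.node j) (k / 2) (fun t ht => LS.node_mono j hj t ht) a b hab hb

lemma node_pos {j : ℕ} (hj : j ∈ Finset.Icc 1 (k - 1)) {t : ℕ}
    (ht : t ≤ k / 2 + 1) : 1 ≤ LS.node j t := by
  rcases Nat.eq_zero_or_pos t with rfl | hpos
  · rw [LS.node_first j hj]
  · have := node_lt LS hj hpos ht
    rw [LS.node_first j hj] at this
    omega

lemma mem_links_iff (hk : 1 ≤ k) (e : Sym2 ℕ) :
    e ∈ LS.links ↔ e = s(1, nn k) ∨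
      ∃ j ∈ Finset.Icc 1 (k - 1), ∃ t ≤ k / 2,
        e = s(LS.node j t, LS.node j (t + 1)) := by
  constructor
  · intro he
    obtain ⟨j, hj, hePj⟩ := Finset.mem_biUnion.1 he
    rw [Finset.mem_Icc] at hj
    by_cases hjk : j = k
    · subst hjk
      rw [LinksSystem.P, if_pos rfl, Finset.mem_singleton] at hePj
      exact Or.inl hePj
    · rw [LinksSystem.P, if_neg hjk] at hePj
      obtain ⟨t, ht, rfl⟩ := Finset.mem_image.1 hePj
      rw [Finset.mem_Icc] at ht
      exact Or.inr ⟨j, Finset.mem_Icc.2 ⟨hj.1, by omega⟩, t, ht.2, rfl⟩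
  · rintro (rfl | ⟨j, hj, t, ht, rfl⟩)
    · refine Finset.mem_biUnion.2 ⟨k, Finset.mem_Icc.2 ⟨hk, le_refl k⟩, ?_⟩
      rw [LinksSystem.P, if_pos rfl]
      exact Finset.mem_singleton_self _
    · rw [Finset.mem_Icc] at hj
      refine Finset.mem_biUnion.2 ⟨j, Finset.mem_Icc.2 ⟨hj.1, by omega⟩, ?_⟩
      rw [LinksSystem.P, if_neg (by omega)]
      exact Finset.mem_image.2 ⟨t, Finset.mem_Icc.2 ⟨Nat.zero_le t, ht⟩, rfl⟩

lemma links_endpoint_pos (hk : 1 ≤ k) {e : Sym2 ℕ} (he : e ∈ LS.links)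
    {a b : ℕ} (hab : e = s(a, b)) : 1 ≤ a ∧ 1 ≤ b := by
  rw [mem_links_iff LS hk] at he
  have hn : 1 ≤ nn k := by unfold nn; omega
  rcases he with he | ⟨j, hj, t, ht, he⟩
  · rw [he, Sym2.eq_iff] at hab
    rcases hab with ⟨rfl, rfl⟩ | ⟨rfl, rfl⟩ <;> omega
  · rw [he, Sym2.eq_iff] at hab
    have h1 := node_pos LS hj (show t ≤ k / 2 + 1 by omega)
    have h2 := node_pos LS hj (show t + 1 ≤ k / 2 + 1 by omega)
    rcases hab with ⟨rfl, rfl⟩ | ⟨rfl, rfl⟩ <;> omega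

lemma mem_delta_iff (hk : 1 ≤ k) (i : ℕ) {e : Sym2 ℕ} :
    e ∈ deltaL LS.links (Nset i) ↔
      e ∈ LS.links ∧ ∃ a b, e = s(a, b) ∧ 1 ≤ a ∧ a ≤ i ∧ i < b := by
  classical
  rw [deltaL, Finset.mem_filter]
  constructor
  · rintro ⟨hl, a, b, hab, haS, hbS⟩
    rw [Nset, Finset.mem_Icc] at haS
    rw [Nset, Finset.mem_Icc] at hbS
    have hb1 := (links_endpoint_pos LS hk hl hab).2
    exact ⟨hl, a, b, hab, haS.1, haS.2, by omega⟩
  · rintro ⟨hl, a, b, hab, h1, h2, h3⟩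
    refine ⟨hl, a, b, hab, ?_, ?_⟩
    · rw [Nset, Finset.mem_Icc]; omega
    · rw [Nset, Finset.mem_Icc]; omega

lemma cut_struct (hk : 4 ≤ k) (i : ℕ) (hi1 : 1 ≤ i) (hi2 : i < nn k) :
    ∃ f : ℕ → Sym2 ℕ,
      (∀ j ∈ Finset.Icc 1 k, f j ∈ deltaL LS.links (Nset i) ∧ f j ∈ LS.P j) ∧
      ∀ e ∈ deltaL LS.links (Nset i), ∃ j ∈ Finset.Icc 1 k, e = f j := by
  have hk1 : 1 ≤ k := by omega
  have hex : ∀ j, ∃ t, j ∈ Finset.Icc 1 (k - 1) →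
      t ≤ k / 2 ∧ LS.node j t ≤ i ∧ i < LS.node j (t + 1) := by
    intro j
    by_cases hj : j ∈ Finset.Icc 1 (k - 1)
    · obtain ⟨t, ht1, ht2, ht3⟩ := exists_cross_aux (LS.node j) i (k / 2)
        (by rw [LS.node_first j hj]; exact hi1)
        (by rw [LS.node_last j hj]; exact hi2)
      exact ⟨t, fun _ => ⟨ht1, ht2, ht3⟩⟩
    · exact ⟨0, fun hc => absurd hc hj⟩
  choose tf htf using hex
  have uniq : ∀ j (hj : j ∈ Finset.Icc 1 (k - 1)), ∀ t, t ≤ k / 2 →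
      LS.node j t ≤ i → i < LS.node j (t + 1) → t = tf j := by
    intro j hj t ht h1 h2
    obtain ⟨ht1', h1', h2'⟩ := htf j hj
    by_contra hne
    rcases Nat.lt_or_ge t (tf j) with hc | hc
    · have : LS.node j (t + 1) ≤ LS.node j (tf j) := by
        rcases Nat.lt_or_ge (t + 1) (tf j) with hc2 | hc2
        · exact le_of_lt (node_lt LS hj hc2 (by omega))
        · have : t + 1 = tf j := by omega
          rw [this]
      omega
    · have hlt : tf j < t := by omega
      have : LS.node j (tf j + 1) ≤ LS.node j t := by
        rcases Nat.lt_or_ge (tf j + 1) t with hc2 | hc2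
        · exact le_of_lt (node_lt LS hj hc2 (by omega))
        · have : tf j + 1 = t := by omega
          rw [this]
      omega
  refine ⟨fun j => if j = k then s(1, nn k)
    else s(LS.node j (tf j), LS.node j (tf j + 1)), ?_, ?_⟩
  · intro j hj
    beta_reduce
    rw [Finset.mem_Icc] at hj
    by_cases hjk : j = k
    · rw [if_pos hjk]
      constructor
      · rw [mem_delta_iff LS hk1]
        exact ⟨(mem_links_iff LS hk1 _).2 (Or.inl rfl), 1, nn k, rfl, le_refl 1, hi1, hi2⟩
      · rw [LinksSystem.P, if_pos hjk]; exact Finset.mem_singleton_self _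
    · rw [if_neg hjk]
      have hj' : j ∈ Finset.Icc 1 (k - 1) := Finset.mem_Icc.2 ⟨hj.1, by omega⟩
      obtain ⟨ht1, ht2, ht3⟩ := htf j hj'
      constructor
      · rw [mem_delta_iff LS hk1]
        refine ⟨(mem_links_iff LS hk1 _).2 (Or.inr ⟨j, hj', tf j, ht1, rfl⟩),
          LS.node j (tf j), LS.node j (tf j + 1), rfl,
          node_pos LS hj' (by omega), ht2, ht3⟩
      · rw [LinksSystem.P, if_neg hjk]
        exact Finset.mem_image.2 ⟨tf j, Finset.mem_Icc.2 ⟨Nat.zero_le _, ht1⟩, rfl⟩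
  · intro e he
    rw [mem_delta_iff LS hk1] at he
    obtain ⟨hl, a, b, hab, h1, h2, h3⟩ := he
    rw [mem_links_iff LS hk1] at hl
    rcases hl with rfl | ⟨j, hj, t, ht, rfl⟩
    · exact ⟨k, Finset.mem_Icc.2 ⟨hk1, le_refl k⟩, by beta_reduce; rw [if_pos rfl]⟩
    · rw [Sym2.eq_iff] at hab
      rcases hab with ⟨ha, hb⟩ | ⟨ha, hb⟩
    -- case a = node j t
      · have htt : t = tf j := uniq j hj t ht (by omega) (by omega)
        rw [Finset.mem_Icc] at hj
        refine ⟨j, Finset.mem_Icc.2 ⟨hj.1, by omega⟩, ?_⟩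
        beta_reduce
        rw [if_neg (by omega : ¬ j = k), htt]
      · have := node_lt LS hj ((by omega : t < t + 1)) (by omega)
        omega

lemma cut_props (hk : 4 ≤ k) (φ : Sym2 ℕ → ℕ)
    (hφ : ∀ i ∈ Finset.Icc 1 k, ∀ e ∈ LS.P i, φ e = i)
    (i : ℕ) (hi1 : 1 ≤ i) (hi2 : i < nn k) :
    (deltaL LS.links (Nset i)).card = k ∧
    (deltaL LS.links (Nset i)).image φ = Finset.Icc 1 k ∧
    ∀ e1 ∈ deltaL LS.links (Nset i), ∀ e2 ∈ deltaL LS.links (Nset i),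
      φ e1 = φ e2 → e1 = e2 := by
  obtain ⟨f, h1, h2⟩ := cut_struct LS hk i hi1 hi2
  have hfφ : ∀ j ∈ Finset.Icc 1 k, φ (f j) = j := fun j hj => hφ j hj _ (h1 j hj).2
  have heq : deltaL LS.links (Nset i) = (Finset.Icc 1 k).image f := by
    ext e
    rw [Finset.mem_image]
    constructor
    · intro he
      obtain ⟨j, hj, rfl⟩ := h2 e he
      exact ⟨j, hj, rfl⟩
    · rintro ⟨j, hj, rfl⟩
      exact (h1 j hj).1
  have hfinj : ∀ j1 ∈ Finset.Icc 1 k, ∀ j2 ∈ Finset.Icc 1 k, f j1 = f j2 → j1 = j2 := by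
    intro j1 hj1 j2 hj2 hf
    rw [← hfφ j1 hj1, ← hfφ j2 hj2, hf]
  refine ⟨?_, ?_, ?_⟩
  · rw [heq, Finset.card_image_of_injOn hfinj, Nat.card_Icc]
    omega
  · rw [heq, Finset.image_image]
    have : ∀ j ∈ Finset.Icc 1 k, (φ ∘ f) j = id j := fun j hj => hfφ j hj
    rw [Finset.image_congr this, Finset.image_id]
  · intro e1 he1 e2 he2 hφe
    rw [heq] at he1 he2
    obtain ⟨j1, hj1, rfl⟩ := Finset.mem_image.1 he1
    obtain ⟨j2, hj2, rfl⟩ := Finset.mem_image.1 he2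
    rw [hfφ j1 hj1, hfφ j2 hj2] at hφe
    subst hφe
    rfl

lemma up_link (hk : 4 ≤ k) {v b : ℕ} (hv : 2 ≤ v) {e : Sym2 ℕ}
    (he : e ∈ LS.links) (hb : v < b) (heq : e = s(v, b)) :
    ∃ j ∈ Finset.Icc 1 (k - 1), ∃ t, 1 ≤ t ∧ t ≤ k / 2 ∧
      LS.node j t = v ∧ b = LS.node j (t + 1) := by
  have hk1 : 1 ≤ k := by omega
  rw [mem_links_iff LS hk1] at he
  rcases he with rfl | ⟨j, hj, t, ht, rfl⟩
  · rw [Sym2.eq_iff] at heq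
    rcases heq with ⟨h1, h2⟩ | ⟨h1, h2⟩ <;> omega
  · rw [Sym2.eq_iff] at heq
    rcases heq with ⟨h1, h2⟩ | ⟨h1, h2⟩
    · have ht0 : 1 ≤ t := by
        by_contra hc
        have : t = 0 := by omega
        subst this
        rw [LS.node_first j hj] at h1
        omega
      exact ⟨j, hj, t, ht0, ht, h1, h2.symm⟩
    · have := node_lt LS hj ((by omega : t < t + 1)) (by omega)
      omega

lemma up_unique (hk : 4 ≤ k) {v b b' : ℕ} (hv : 2 ≤ v) {e e' : Sym2 ℕ}
    (he : e ∈ LS.links) (he' : e' ∈ LS.links) (hb : v < b) (hb' : v < b')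
    (heq : e = s(v, b)) (heq' : e' = s(v, b')) : e = e' ∧ v < nn k := by
  obtain ⟨j, hj, t, ht0, ht, hnode, hbe⟩ := up_link LS hk hv he hb heq
  obtain ⟨j', hj', t', ht0', ht', hnode', hbe'⟩ := up_link LS hk hv he' hb' heq'
  have hvn : v < nn k := by
    have h1 := node_lt LS hj (show t < k / 2 + 1 by omega) (le_refl _)
    rw [LS.node_last j hj] at h1
    omega
  have hjj : j = j' := by
    obtain ⟨j0, _, huniq⟩ := LS.cover v (Finset.mem_Icc.2 ⟨hv, by omega⟩)
    have e1 := huniq j ⟨hj, t, Finset.mem_Icc.2 ⟨ht0, ht⟩, hnode⟩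
    have e2 := huniq j' ⟨hj', t', Finset.mem_Icc.2 ⟨ht0', ht'⟩, hnode'⟩
    rw [e1, e2]
  subst hjj
  have htt : t = t' := by
    by_contra hne
    rcases Nat.lt_or_ge t t' with hc | hc
    · have := node_lt LS hj hc (by omega)
      omega
    · have := node_lt LS hj (show t' < t by omega) (by omega)
      omega
  subst htt
  rw [heq, heq', hbe, hbe']
  exact ⟨rfl, hvn⟩

end LSLemmas

/-- for every links system with links indexed as described and with `φ`
assigning to each link the index of the class `P_i` containing it: if `L'` is a set of
exactly `k/2` links with `ℓ_k ∉ L'` contained in some nested cut, `h ≥ 2` is the smallest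
index with `L' ⊆ δ_L(N_h)`, `L̄ = δ_L(N_h) \ L'`, and `g` is the smallest index with
`L̄ ⊆ δ_L(N_g)`, then `g < h` and `L'' = δ_L(N_g) \ L̄` consists of exactly `k/2` links,
does not contain `ℓ_k`, satisfies `χ^{L''} = χ^{L'} - χ^{δ_L(N_h)} + χ^{δ_L(N_g)}`,
and satisfies `φ(L'') = φ(L')`. -/
theorem statement10 (k : ℕ) (hk : 4 ≤ k) (hke : Even k) (LS : LinksSystem k)
    (ℓ : ℕ → Sym2 ℕ)
    (hℓ1 : ∀ i ∈ Finset.Icc 1 k, ℓ i ∈ LS.P i ∧ ∃ b, ℓ i = s(1, b))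
    (hℓ2 : ∀ v ∈ Finset.Icc 2 (nn k - 1),
        ℓ (k + v - 1) ∈ LS.links ∧ ∃ b, v < b ∧ ℓ (k + v - 1) = s(v, b))
    (φ : Sym2 ℕ → ℕ)
    (hφ : ∀ i ∈ Finset.Icc 1 k, ∀ e ∈ LS.P i, φ e = i)
    (L' : Finset (Sym2 ℕ)) (hL'card : L'.card = k / 2) (hL'k : ℓ k ∉ L')
    (h : ℕ) (hh1 : L' ⊆ deltaL LS.links (Nset h))
    (hh2 : ∀ i : ℕ, L' ⊆ deltaL LS.links (Nset i) → h ≤ i)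
    (hh3 : 2 ≤ h)
    (g : ℕ) (hg1 : deltaL LS.links (Nset h) \ L' ⊆ deltaL LS.links (Nset g))
    (hg2 : ∀ i : ℕ, deltaL LS.links (Nset h) \ L' ⊆ deltaL LS.links (Nset i) → g ≤ i) :
    g < h ∧
    (deltaL LS.links (Nset g) \ (deltaL LS.links (Nset h) \ L')).card = k / 2 ∧
    ℓ k ∉ deltaL LS.links (Nset g) \ (deltaL LS.links (Nset h) \ L') ∧
    (∀ e : Sym2 ℕ,
      chi (deltaL LS.links (Nset g) \ (deltaL LS.links (Nset h) \ L')) e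
        = chi L' e - chi (deltaL LS.links (Nset h)) e
            + chi (deltaL LS.links (Nset g)) e) ∧
    (deltaL LS.links (Nset g) \ (deltaL LS.links (Nset h) \ L')).image φ
      = L'.image φ := by
  have hk1 : 1 ≤ k := by omega
  have hk2 : k / 2 + k / 2 = k := by obtain ⟨r, hr⟩ := hke; omega
  -- find the link of L' with lower endpoint h
  have hnot : ¬ L' ⊆ deltaL LS.links (Nset (h - 1)) := by
    intro hs; have := hh2 _ hs; omega
  obtain ⟨e0, he0L, he0n⟩ := Finset.not_subset.1 hnot
  have he0δ := hh1 he0L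
  rw [mem_delta_iff LS hk1] at he0δ
  obtain ⟨he0links, a, b, hab, ha1, hah, hbh⟩ := he0δ
  have hae : a = h := by
    by_contra hne
    apply he0n
    rw [mem_delta_iff LS hk1]
    exact ⟨he0links, a, b, hab, ha1, by omega, by omega⟩
  subst hae
  have hhn : a < nn k :=
    (up_unique LS hk hh3 he0links he0links hbh hbh hab hab).2
  -- ℓ k = s(1, nn k)
  have hℓk : ℓ k = s(1, nn k) := by
    have := (hℓ1 k (Finset.mem_Icc.2 ⟨hk1, le_refl k⟩)).1
    rw [LinksSystem.P, if_pos rfl, Finset.mem_singleton] at this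
    exact this
  have hℓkδh : ℓ k ∈ deltaL LS.links (Nset a) := by
    rw [mem_delta_iff LS hk1]
    exact ⟨(mem_links_iff LS hk1 _).2 (Or.inl hℓk), 1, nn k, hℓk, le_refl 1, by omega, hhn⟩
  have hℓkbar : ℓ k ∈ deltaL LS.links (Nset a) \ L' := Finset.mem_sdiff.2 ⟨hℓkδh, hL'k⟩
  have hg0 : 1 ≤ g := by
    by_contra hc
    have hg' : g = 0 := by omega
    have := hg1 hℓkbar
    rw [hg', mem_delta_iff LS hk1] at this
    obtain ⟨_, a', b', _, h1', h2', _⟩ := this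
    omega
  have hbar_sub : deltaL LS.links (Nset a) \ L' ⊆ deltaL LS.links (Nset (a - 1)) := by
    intro e heL
    have heδ := (Finset.mem_sdiff.1 heL).1
    rw [mem_delta_iff LS hk1] at heδ
    obtain ⟨hel, a', b', he', ha1', hah', hbh'⟩ := heδ
    have hne : a' ≠ a := by
      intro hha
      subst hha
      have := (up_unique LS hk hh3 hel he0links hbh' hbh he' hab).1
      rw [this] at heL
      exact (Finset.mem_sdiff.1 heL).2 he0L
    rw [mem_delta_iff LS hk1]
    exact ⟨hel, a', b', he', ha1', by omega, by omega⟩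
  have hgh : g < a := by
    have := hg2 _ hbar_sub; omega
  obtain ⟨hcardh, himgh, hinjh⟩ := cut_props LS hk φ hφ a (by omega) hhn
  obtain ⟨hcardg, himgg, hinjg⟩ := cut_props LS hk φ hφ g hg0 (by omega)
  have hbarcard : (deltaL LS.links (Nset a) \ L').card = k / 2 := by
    rw [Finset.card_sdiff_of_subset hh1, hcardh, hL'card]; omega
  refine ⟨hgh, ?_, ?_, ?_, ?_⟩
  · rw [Finset.card_sdiff_of_subset hg1, hcardg, hbarcard]; omega
  · intro hmem
    exact (Finset.mem_sdiff.1 hmem).2 hℓkbar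
  · intro e
    have hPH : e ∈ L' → e ∈ deltaL LS.links (Nset a) := fun hP => hh1 hP
    have hHG : e ∈ deltaL LS.links (Nset a) → e ∉ L' → e ∈ deltaL LS.links (Nset g) :=
      fun h1 h2 => hg1 (Finset.mem_sdiff.2 ⟨h1, h2⟩)
    simp only [chi, Finset.mem_sdiff]
    by_cases hP : e ∈ L'
    · have hH := hPH hP
      by_cases hG : e ∈ deltaL LS.links (Nset g) <;> simp [hP, hH, hG] <;> norm_num
    · by_cases hH : e ∈ deltaL LS.links (Nset a)
      · have hG := hHG hH hP
        simp [hP, hH, hG] <;> norm_num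
      · by_cases hG : e ∈ deltaL LS.links (Nset g) <;> simp [hP, hH, hG] <;> norm_num
  · calc (deltaL LS.links (Nset g) \ (deltaL LS.links (Nset a) \ L')).image φ
        = (deltaL LS.links (Nset g)).image φ \ (deltaL LS.links (Nset a) \ L').image φ :=
          image_sdiff_injOn _ _ φ hg1 hinjg
      _ = (deltaL LS.links (Nset a)).image φ \ (deltaL LS.links (Nset a) \ L').image φ := by
          rw [himgg, himgh]
      _ = (deltaL LS.links (Nset a) \ (deltaL LS.links (Nset a) \ L')).image φ :=
          (image_sdiff_injOn _ _ φ Finset.sdiff_subset hinjh).symm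
      _ = L'.image φ := by
          rw [Finset.sdiff_sdiff_eq_self hh1]

end CoverSmallCuts
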